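/- Let M ≥ 1, let Θ ∈ ℂ^{M×M} be Hermitian positive semidefinite, let ĝ ∈ ℂ^M, let ε > 0, and let c ≥ 0 be a real number. Then (ĝ + δ)^H Θ (ĝ + δ) ≥ c holds for every δ ∈ ℂ^M with ‖δ‖₂ ≤ ε if and only if there exists a real number q ≥ 0 such that the (M+1)×(M+1) block matrix [[ĝ^H Θ ĝ − q − c, ĝ^H Θ], [Θ ĝ, Θ + (q/ε²)·I_M]] is positive semidefinite. -/

import Mathlib

open Matrix
open scoped ComplexOrder ComplexConjugate

noncomputable section
variable {M : ℕ}

lemma herm_dot {Θ : Matrix (Fin M) (Fin M) ℂ} (h : Θ.IsHermitian) (x y : Fin M → ℂ) :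
    star x ⬝ᵥ (Θ *ᵥ y) = conj (star y ⬝ᵥ (Θ *ᵥ x)) := by
  simp only [dotProduct, mulVec, dotProduct, Pi.star_apply, map_sum, _root_.map_mul, Finset.mul_sum,
    RCLike.star_def, starRingEnd_self_apply]
  rw [Finset.sum_comm]
  refine Finset.sum_congr rfl fun i _ => Finset.sum_congr rfl fun j _ => ?_
  have : conj (Θ i j) = Θ j i := by
    conv_rhs => rw [← h.eq]; simp [conjTranspose_apply]
  rw [this]; ring

lemma tsmall (a b : ℝ) (h : ∀ t : ℝ, 0 < t → t ≤ 1 → 0 ≤ 2*t*a + t^2*b) : 0 ≤ a := by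
  by_contra hlt
  push_neg at hlt
  rcases le_or_gt b 0 with hb | hb
  · have := h 1 one_pos le_rfl
    nlinarith
  · have ht1 : (0:ℝ) < min 1 (-a/b) := lt_min one_pos (div_pos (by linarith) hb)
    have := h _ ht1 (min_le_left _ _)
    have h2 : min 1 (-a/b) ≤ -a/b := min_le_right _ _
    have h3 : min 1 (-a/b) * b ≤ -a := by
      rw [← le_div_iff₀ hb]; exact h2
    nlinarith [mul_le_mul_of_nonneg_left h3 ht1.le]

lemma quad_nonneg {Θ : Matrix (Fin M) (Fin M) ℂ} (h : Θ.PosSemidef) (x : Fin M → ℂ) :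
    0 ≤ (star x ⬝ᵥ (Θ *ᵥ x)).re ∧ (star x ⬝ᵥ (Θ *ᵥ x)).im = 0 := by
  have := h.dotProduct_mulVec_nonneg x
  rw [Complex.le_def] at this
  exact ⟨this.1, this.2.symm⟩

lemma dot_self_eq (x : Fin M → ℂ) :
    star x ⬝ᵥ x = ((∑ i, ‖x i‖^2 : ℝ) : ℂ) := by
  simp only [dotProduct, Pi.star_apply, RCLike.star_def, Complex.ofReal_sum]
  refine Finset.sum_congr rfl fun i _ => ?_
  rw [RCLike.conj_mul]
  norm_cast

lemma expand_dot {Θ : Matrix (Fin M) (Fin M) ℂ} (h : Θ.IsHermitian) (x v : Fin M → ℂ) :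
    star (x + v) ⬝ᵥ (Θ *ᵥ (x + v)) =
      star x ⬝ᵥ (Θ *ᵥ x) + ((2 * (star v ⬝ᵥ (Θ *ᵥ x)).re : ℝ) : ℂ) + star v ⬝ᵥ (Θ *ᵥ v) := by
  have e1 : star x ⬝ᵥ (Θ *ᵥ v) = conj (star v ⬝ᵥ (Θ *ᵥ x)) := herm_dot h x v
  have e2 := Complex.add_conj (star v ⬝ᵥ (Θ *ᵥ x))
  simp only [star_add, add_dotProduct, mulVec_add, dotProduct_add, e1]
  push_cast at e2 ⊢
  linear_combination e2

lemma smul_dot_left (t : ℂ) (v y : Fin M → ℂ) :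
    star (t • v) ⬝ᵥ y = conj t * (star v ⬝ᵥ y) := by
  rw [star_smul, smul_dotProduct]; rfl

abbrev Nsq (δ : Fin M → ℂ) : ℝ := ∑ i, ‖δ i‖^2

lemma nsq_eq_re (x : Fin M → ℂ) : Nsq x = (star x ⬝ᵥ x).re := by
  rw [dot_self_eq, Complex.ofReal_re]

lemma nsq_smul (r : ℝ) (x : Fin M → ℂ) : Nsq ((r:ℂ) • x) = r^2 * Nsq x := by
  simp only [Nsq, Pi.smul_apply, smul_eq_mul, norm_mul, Complex.norm_real, mul_pow,
    Finset.mul_sum, Real.norm_eq_abs, sq_abs]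

lemma seg_mem {ε : ℝ} (hε : 0 ≤ ε) (a b : Fin M → ℂ) (t : ℝ) (ht0 : 0 ≤ t) (ht1 : t ≤ 1)
    (ha : Nsq a ≤ ε^2) (hb : Nsq b ≤ ε^2) : Nsq (a + (t:ℂ) • (b - a)) ≤ ε^2 := by
  set e := WithLp.equiv 2 (Fin M → ℂ)
  have hball : ∀ x : EuclideanSpace ℂ (Fin M), ‖x‖ ≤ ε ↔ Nsq (e x) ≤ ε^2 := by
    intro x
    have hx : ‖x‖^2 = Nsq (e x) := by
      rw [EuclideanSpace.norm_eq, Real.sq_sqrt] <;> first | rfl | positivity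
    constructor
    · intro h; rw [← hx]; nlinarith [norm_nonneg x]
    · intro h; nlinarith [norm_nonneg x]
  have hA : e.symm a ∈ Metric.closedBall (0 : EuclideanSpace ℂ (Fin M)) ε := by
    simp only [Metric.mem_closedBall, dist_zero_right]; rw [hball]; simpa using ha
  have hB : e.symm b ∈ Metric.closedBall (0 : EuclideanSpace ℂ (Fin M)) ε := by
    simp only [Metric.mem_closedBall, dist_zero_right]; rw [hball]; simpa using hb
  have hmem := (convex_closedBall (0 : EuclideanSpace ℂ (Fin M)) ε) hA hB
    (by linarith : (0:ℝ) ≤ 1 - t) ht0 (by ring)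
  have hrw : (1 - t) • e.symm a + t • e.symm b = e.symm (a + (t:ℂ) • (b - a)) := by
    rw [show e.symm (a + (t:ℂ) • (b - a)) = e.symm a + (t:ℂ) • (e.symm b - e.symm a) from rfl]
    have : (t:ℂ) • (e.symm b - e.symm a) = t • (e.symm b - e.symm a) := by
      rw [← Complex.coe_algebraMap, algebraMap_smul]
    rw [this]
    module
  rw [hrw] at hmem
  simp only [Metric.mem_closedBall, dist_zero_right] at hmem
  rw [hball] at hmem
  simpa using hmem

lemma exists_min (Θ : Matrix (Fin M) (Fin M) ℂ) (g : Fin M → ℂ) (ε : ℝ) (hε : 0 < ε) :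
    ∃ δ₀ : Fin M → ℂ, Nsq δ₀ ≤ ε^2 ∧ ∀ δ : Fin M → ℂ, Nsq δ ≤ ε^2 →
      (star (g + δ₀) ⬝ᵥ (Θ *ᵥ (g + δ₀))).re ≤ (star (g + δ) ⬝ᵥ (Θ *ᵥ (g + δ))).re := by
  set f : (Fin M → ℂ) → ℝ := fun δ => (star (g + δ) ⬝ᵥ (Θ *ᵥ (g + δ))).re with hf
  have hfc : Continuous f := by
    simp only [hf, dotProduct, mulVec, dotProduct]
    fun_prop
  set e := WithLp.equiv 2 (Fin M → ℂ)
  have hball : ∀ x : EuclideanSpace ℂ (Fin M), ‖x‖ ≤ ε ↔ Nsq (e x) ≤ ε^2 := by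
    intro x
    have hx : ‖x‖^2 = Nsq (e x) := by
      rw [EuclideanSpace.norm_eq, Real.sq_sqrt] <;> first | rfl | positivity
    constructor
    · intro h; rw [← hx]; nlinarith [norm_nonneg x]
    · intro h; nlinarith [norm_nonneg x]
  obtain ⟨x₀, hx₀, hmin⟩ := (isCompact_closedBall (0 : EuclideanSpace ℂ (Fin M)) ε).exists_isMinOn
    ⟨0, by simp [hε.le]⟩ (hfc.comp (PiLp.continuous_ofLp 2 _)).continuousOn
  refine ⟨e x₀, ?_, ?_⟩
  · rw [← hball]
    simpa [Metric.mem_closedBall, dist_zero_right] using hx₀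
  · intro δ hδ
    have : e.symm δ ∈ Metric.closedBall (0 : EuclideanSpace ℂ (Fin M)) ε := by
      simp only [Metric.mem_closedBall, dist_zero_right]
      rw [hball]
      simpa using hδ
    exact hmin this

lemma exists_lambda {Θ : Matrix (Fin M) (Fin M) ℂ} (hΘ : Θ.PosSemidef)
    (g : Fin M → ℂ) {ε : ℝ} (hε : 0 < ε) :
    ∃ (δ₀ : Fin M → ℂ) (lam : ℝ), 0 ≤ lam ∧ Nsq δ₀ ≤ ε^2 ∧
      Θ *ᵥ (g + δ₀) = (-(lam:ℂ)) • δ₀ ∧ lam * (ε^2 - Nsq δ₀) = 0 ∧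
      (∀ δ : Fin M → ℂ, Nsq δ ≤ ε^2 →
        (star (g + δ₀) ⬝ᵥ (Θ *ᵥ (g + δ₀))).re ≤ (star (g + δ) ⬝ᵥ (Θ *ᵥ (g + δ))).re) := by
  obtain ⟨δ₀, hδ₀, hmin⟩ := exists_min Θ g ε hε
  set w := Θ *ᵥ (g + δ₀) with hw
  -- variational inequality
  have hVI : ∀ δ : Fin M → ℂ, Nsq δ ≤ ε^2 → 0 ≤ (star (δ - δ₀) ⬝ᵥ w).re := by
    intro δ hδ
    set v := δ - δ₀ with hv
    apply tsmall _ ((star v ⬝ᵥ (Θ *ᵥ v)).re)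
    intro t ht0 ht1
    have hmem := seg_mem hε.le δ₀ δ t ht0.le ht1 hδ₀ hδ
    have h2 := hmin _ hmem
    have hx := expand_dot hΘ.1 (g + δ₀) ((t:ℂ) • v)
    simp only [smul_dot_left, mulVec_smul, dotProduct_smul, Complex.conj_ofReal,
      smul_eq_mul] at hx
    have hgr : g + (δ₀ + (t:ℂ) • v) = (g + δ₀) + (t:ℂ) • v := (add_assoc _ _ _).symm
    rw [hgr, hx, ← hw] at h2
    simp only [Complex.add_re, Complex.ofReal_re, Complex.re_ofReal_mul] at h2
    nlinarith [h2]
  set s := Real.sqrt (Nsq w) with hs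
  have hs0 : 0 ≤ s := Real.sqrt_nonneg _
  have hNw0 : 0 ≤ Nsq w := Finset.sum_nonneg fun i _ => by positivity
  have hs2 : s^2 = Nsq w := Real.sq_sqrt hNw0
  -- key : re ⟨δ₀, w⟩ ≤ -ε * s
  have hkey : (star δ₀ ⬝ᵥ w).re ≤ -(ε * s) := by
    rcases eq_or_ne w 0 with h0 | h0
    · simp [h0, hs, Nsq]
    · have hNwne : Nsq w ≠ 0 := by
        intro hzz
        apply h0
        funext i
        have hnn : ∀ j ∈ Finset.univ, (0:ℝ) ≤ ‖w j‖^2 := fun j _ => by positivity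
        have := (Finset.sum_eq_zero_iff_of_nonneg hnn).mp hzz i (Finset.mem_univ i)
        simpa using this
      have hNwpos : 0 < Nsq w := lt_of_le_of_ne hNw0 (Ne.symm hNwne)
      have hsp : 0 < s := by rw [hs]; exact Real.sqrt_pos.mpr hNwpos
      set δ := ((-(ε/s) : ℝ) : ℂ) • w with hδdef
      have hδball : Nsq δ ≤ ε^2 := by
        rw [hδdef, nsq_smul, ← hs2]
        have : (-(ε / s)) ^ 2 * s ^ 2 = ε ^ 2 := by
          field_simp [hsp.ne']
        rw [this]
      have hvi := hVI δ hδball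
      rw [star_sub, sub_dotProduct, hδdef, smul_dot_left, Complex.conj_ofReal, dot_self_eq] at hvi
      simp only [Complex.sub_re, Complex.re_ofReal_mul, Complex.ofReal_re] at hvi
      have hrw : -(ε/s) * (Nsq w) = -(ε*s) := by
        rw [← hs2]; field_simp [hsp.ne']
      rw [hrw] at hvi
      linarith
  set lam := s / ε with hlam
  have hlam0 : 0 ≤ lam := div_nonneg hs0 hε.le
  have hlε : lam * ε = s := by rw [hlam]; field_simp
  -- u = w + lam δ₀ = 0
  have hu : w + ((lam : ℝ) : ℂ) • δ₀ = 0 := by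
    have h1 : (1 : Matrix (Fin M) (Fin M) ℂ).IsHermitian := Matrix.isHermitian_one
    have hx := expand_dot h1 w (((lam : ℝ) : ℂ) • δ₀)
    simp only [one_mulVec, smul_dot_left, dotProduct_smul, Complex.conj_ofReal,
      smul_eq_mul] at hx
    have hexp : (star (w + ((lam:ℝ):ℂ) • δ₀) ⬝ᵥ (w + ((lam:ℝ):ℂ) • δ₀)).re
        = Nsq w + 2 * (lam * (star δ₀ ⬝ᵥ w).re) + lam * (lam * Nsq δ₀) := by
      rw [hx, dot_self_eq w, nsq_eq_re δ₀]
      simp only [Complex.add_re, Complex.ofReal_re, Complex.re_ofReal_mul]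
    have hle : (star (w + ((lam:ℝ):ℂ) • δ₀) ⬝ᵥ (w + ((lam:ℝ):ℂ) • δ₀)).re ≤ 0 := by
      rw [hexp]
      have b1 : lam * (star δ₀ ⬝ᵥ w).re ≤ lam * (-(ε*s)) := mul_le_mul_of_nonneg_left hkey hlam0
      have b2 : lam * (lam * Nsq δ₀) ≤ lam * (lam * ε^2) := by
        apply mul_le_mul_of_nonneg_left _ hlam0
        apply mul_le_mul_of_nonneg_left hδ₀ hlam0
      have b3 : lam * (ε * s) = s^2 := by rw [← hlε]; ring
      have b4 : lam * (lam * ε^2) = s^2 := by rw [← hlε]; ring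
      nlinarith [hs2]
    have hnn : 0 ≤ Nsq (w + ((lam:ℝ):ℂ) • δ₀) := Finset.sum_nonneg fun i _ => by positivity
    have hz : Nsq (w + ((lam:ℝ):ℂ) • δ₀) = 0 := by
      rw [nsq_eq_re]
      exact le_antisymm hle (by rw [← nsq_eq_re]; exact hnn)
    funext i
    have hnn2 : ∀ j ∈ Finset.univ, (0:ℝ) ≤ ‖(w + ((lam:ℝ):ℂ) • δ₀) j‖^2 := fun j _ => by positivity
    have := (Finset.sum_eq_zero_iff_of_nonneg hnn2).mp hz i (Finset.mem_univ i)
    simpa using this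
  have hweq : w = (-(lam:ℂ)) • δ₀ := by
    rw [add_eq_zero_iff_eq_neg] at hu
    rw [hu, ← neg_smul]
  refine ⟨δ₀, lam, hlam0, hδ₀, by rw [← hw]; exact hweq, ?_, hmin⟩
  rcases eq_or_lt_of_le hlam0 with h0 | hpos
  · rw [← h0]; ring
  · have hweq2 : w = (((-lam : ℝ)) : ℂ) • δ₀ := by
      rw [hweq]; norm_num
    have hNw : Nsq w = lam^2 * Nsq δ₀ := by
      rw [hweq2, nsq_smul, neg_pow]; ring
    have hNs : Nsq w = lam^2 * ε^2 := by
      rw [← hs2, ← hlε]; ring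
    have hl2 : lam^2 ≠ 0 := pow_ne_zero 2 (ne_of_gt hpos)
    have h5 : lam^2 * Nsq δ₀ = lam^2 * ε^2 := by rw [← hNw, hNs]
    have h6 : Nsq δ₀ = ε^2 := mul_left_cancel₀ hl2 h5
    rw [h6]; ring

lemma block_expand (Θ : Matrix (Fin M) (Fin M) ℂ) (g : Fin M → ℂ) (μ qc : ℂ)
    (t : Fin 1 → ℂ) (x : Fin M → ℂ) :
    star (Sum.elim t x) ⬝ᵥ
      ((Matrix.fromBlocks
        (Matrix.of fun (_ : Fin 1) (_ : Fin 1) => star g ⬝ᵥ (Θ *ᵥ g) - qc)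
        (Matrix.of fun (_ : Fin 1) (j : Fin M) => Matrix.vecMul (star g) Θ j)
        (Matrix.of fun (i : Fin M) (_ : Fin 1) => (Θ *ᵥ g) i)
        (Θ + μ • (1 : Matrix (Fin M) (Fin M) ℂ))) *ᵥ (Sum.elim t x))
    = star (t 0 • g + x) ⬝ᵥ (Θ *ᵥ (t 0 • g + x)) + μ * (star x ⬝ᵥ x)
      - conj (t 0) * t 0 * qc := by
  rw [Function.star_sumElim, fromBlocks_mulVec, sumElim_dotProduct_sumElim]
  have hA : (Matrix.of fun (_ : Fin 1) (_ : Fin 1) => star g ⬝ᵥ (Θ *ᵥ g) - qc) *ᵥ t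
      + (Matrix.of fun (_ : Fin 1) (j : Fin M) => Matrix.vecMul (star g) Θ j) *ᵥ x
      = fun _ => (star g ⬝ᵥ (Θ *ᵥ g) - qc) * t 0 + star g ⬝ᵥ (Θ *ᵥ x) := by
    funext i
    simp only [Pi.add_apply, mulVec, dotProduct, of_apply, Fin.sum_univ_one]
    congr 1
    simp only [vecMul, dotProduct, Pi.star_apply, Finset.sum_mul, Finset.mul_sum]
    rw [Finset.sum_comm]
    exact Finset.sum_congr rfl fun j _ => Finset.sum_congr rfl fun k _ => by ring
  have hC : (Matrix.of fun (i : Fin M) (_ : Fin 1) => (Θ *ᵥ g) i) *ᵥ t = t 0 • (Θ *ᵥ g) := by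
    funext i
    simp only [mulVec, dotProduct, of_apply, Fin.sum_univ_one, Pi.smul_apply, smul_eq_mul]
    ring
  have hD : (Θ + μ • (1 : Matrix (Fin M) (Fin M) ℂ)) *ᵥ x = Θ *ᵥ x + μ • x := by
    rw [add_mulVec, smul_mulVec, one_mulVec]
  simp only [Sum.elim_comp_inl, Sum.elim_comp_inr]
  rw [hA, hC, hD]
  have h1 : star t ⬝ᵥ (fun _ => (star g ⬝ᵥ (Θ *ᵥ g) - qc) * t 0 + star g ⬝ᵥ (Θ *ᵥ x))
      = conj (t 0) * ((star g ⬝ᵥ (Θ *ᵥ g) - qc) * t 0 + star g ⬝ᵥ (Θ *ᵥ x)) := by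
    simp [dotProduct, Fin.sum_univ_one]
  rw [h1, dotProduct_add, dotProduct_add, dotProduct_smul, dotProduct_smul]
  simp only [star_add, star_smul, add_dotProduct, smul_dotProduct, mulVec_add, mulVec_smul,
    dotProduct_add, dotProduct_smul, smul_eq_mul, RCLike.star_def]
  ring

lemma block_herm {Θ : Matrix (Fin M) (Fin M) ℂ} (h : Θ.IsHermitian) (g : Fin M → ℂ) (a r : ℝ) :
    (Matrix.fromBlocks
      (Matrix.of fun (_ : Fin 1) (_ : Fin 1) => star g ⬝ᵥ (Θ *ᵥ g) - (a:ℂ))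
      (Matrix.of fun (_ : Fin 1) (j : Fin M) => Matrix.vecMul (star g) Θ j)
      (Matrix.of fun (i : Fin M) (_ : Fin 1) => (Θ *ᵥ g) i)
      (Θ + ((r:ℝ):ℂ) • (1 : Matrix (Fin M) (Fin M) ℂ))).IsHermitian := by
  have hij : ∀ i j, conj (Θ i j) = Θ j i := by
    intro i j
    conv_rhs => rw [← h.eq]; simp [conjTranspose_apply]
  rw [isHermitian_fromBlocks_iff]
  refine ⟨?_, ?_, ?_, ?_⟩
  · ext i j
    simp only [conjTranspose_apply, of_apply, star_sub, RCLike.star_def]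
    rw [← herm_dot h g g]
    simp [Complex.conj_ofReal]
  · ext i j
    simp only [conjTranspose_apply, of_apply, RCLike.star_def, vecMul, dotProduct, Pi.star_apply,
      map_sum, _root_.map_mul, mulVec, starRingEnd_self_apply]
    refine Finset.sum_congr rfl fun k _ => ?_
    rw [hij]
    ring
  · ext i j
    simp only [conjTranspose_apply, of_apply, RCLike.star_def, vecMul, dotProduct, Pi.star_apply,
      map_sum, _root_.map_mul, mulVec, starRingEnd_self_apply]
    refine Finset.sum_congr rfl fun k _ => ?_
    rw [hij]
    ring
  · apply Matrix.IsHermitian.add h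
    unfold Matrix.IsHermitian
    rw [Matrix.conjTranspose_smul]
    simp [Complex.conj_ofReal]

end

noncomputable section

lemma nsq_nonneg {M : ℕ} (x : Fin M → ℂ) : 0 ≤ Nsq x :=
  Finset.sum_nonneg fun i _ => by positivity

lemma key_ineq {M : ℕ} {Θ : Matrix (Fin M) (Fin M) ℂ} (hΘ : Θ.PosSemidef)
    (g : Fin M → ℂ) {ε : ℝ} (hε : 0 < ε) {c : ℝ}
    (hf : ∀ δ : Fin M → ℂ, Nsq δ ≤ ε^2 → c ≤ (star (g + δ) ⬝ᵥ (Θ *ᵥ (g + δ))).re) :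
    ∃ lam : ℝ, 0 ≤ lam ∧ ∀ δ : Fin M → ℂ,
      0 ≤ (star (g + δ) ⬝ᵥ (Θ *ᵥ (g + δ))).re + lam * Nsq δ - lam * ε^2 - c := by
  obtain ⟨δ₀, lam, hlam0, hball0, hgrad, hslack, hmin⟩ := exists_lambda hΘ g hε
  refine ⟨lam, hlam0, fun δ => ?_⟩
  set v := δ - δ₀ with hv
  have hδv : δ = δ₀ + v := by rw [hv]; ring
  have hgv : g + δ = (g + δ₀) + v := by rw [hδv]; ring
  have hx := expand_dot hΘ.1 (g + δ₀) v
  have hcross : (star v ⬝ᵥ (Θ *ᵥ (g + δ₀))).re = -lam * (star v ⬝ᵥ δ₀).re := by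
    rw [hgrad, dotProduct_smul]
    have h9 : (-(lam:ℂ)) • (star v ⬝ᵥ δ₀) = ((-lam : ℝ) : ℂ) * (star v ⬝ᵥ δ₀) := by
      rw [smul_eq_mul]; push_cast; ring
    rw [h9, Complex.re_ofReal_mul]
  have hre : ((star (g + δ) ⬝ᵥ (Θ *ᵥ (g + δ))).re
      = (star (g + δ₀) ⬝ᵥ (Θ *ᵥ (g + δ₀))).re
        + 2 * (-lam * (star v ⬝ᵥ δ₀).re) + (star v ⬝ᵥ (Θ *ᵥ v)).re) := by
    rw [hgv, hx]
    simp only [Complex.add_re, Complex.ofReal_re]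
    rw [hcross]
  have hnsq : Nsq δ = Nsq δ₀ + 2 * (star v ⬝ᵥ δ₀).re + Nsq v := by
    have h1 : (1 : Matrix (Fin M) (Fin M) ℂ).IsHermitian := Matrix.isHermitian_one
    have hx1 := expand_dot h1 δ₀ v
    simp only [one_mulVec] at hx1
    rw [nsq_eq_re, hδv, hx1]
    simp only [Complex.add_re, Complex.ofReal_re]
    rw [← nsq_eq_re, ← nsq_eq_re]
  have h0 : c ≤ (star (g + δ₀) ⬝ᵥ (Θ *ᵥ (g + δ₀))).re := hf δ₀ hball0
  have h1 : 0 ≤ (star v ⬝ᵥ (Θ *ᵥ v)).re := (quad_nonneg hΘ v).1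
  have h2 : 0 ≤ lam * Nsq v := mul_nonneg hlam0 (nsq_nonneg v)
  nlinarith [hslack]

theorem robust_vector_qi_iff_lmi {M : ℕ} (hM : 1 ≤ M)
    (Θ : Matrix (Fin M) (Fin M) ℂ) (hΘ : Θ.PosSemidef)
    (g : Fin M → ℂ) (ε : ℝ) (hε : 0 < ε) (c : ℝ) (hc : 0 ≤ c) :
    (∀ δ : Fin M → ℂ, Real.sqrt (∑ i, ‖δ i‖ ^ 2) ≤ ε →
      (c : ℂ) ≤ star (g + δ) ⬝ᵥ (Θ *ᵥ (g + δ))) ↔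
    (∃ q : ℝ, 0 ≤ q ∧
      (Matrix.fromBlocks
        (Matrix.of fun (_ : Fin 1) (_ : Fin 1) => star g ⬝ᵥ (Θ *ᵥ g) - (q : ℂ) - (c : ℂ))
        (Matrix.of fun (_ : Fin 1) (j : Fin M) => Matrix.vecMul (star g) Θ j)
        (Matrix.of fun (i : Fin M) (_ : Fin 1) => (Θ *ᵥ g) i)
        (Θ + ((q / ε ^ 2 : ℝ) : ℂ) • (1 : Matrix (Fin M) (Fin M) ℂ))).PosSemidef) := by
  have hsq : ∀ δ : Fin M → ℂ, (Real.sqrt (∑ i, ‖δ i‖ ^ 2) ≤ ε ↔ Nsq δ ≤ ε^2) := by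
    intro δ
    have hnn : (0:ℝ) ≤ ∑ i, ‖δ i‖ ^ 2 := nsq_nonneg δ
    constructor
    · intro h
      have := Real.sq_sqrt hnn
      nlinarith [Real.sqrt_nonneg (∑ i, ‖δ i‖ ^ 2)]
    · intro h
      rw [show ε = Real.sqrt (ε^2) from (Real.sqrt_sq hε.le).symm]
      exact Real.sqrt_le_sqrt h
  constructor
  · intro hfeas
    have hf : ∀ δ : Fin M → ℂ, Nsq δ ≤ ε^2 → c ≤ (star (g + δ) ⬝ᵥ (Θ *ᵥ (g + δ))).re := by
      intro δ hδ
      have := hfeas δ ((hsq δ).mpr hδ)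
      rw [Complex.le_def] at this
      simpa using this.1
    obtain ⟨lam, hlam0, hkey⟩ := key_ineq hΘ g hε hf
    have hqd : ((lam * ε^2) / ε^2 : ℝ) = lam := by field_simp
    refine ⟨lam * ε^2, mul_nonneg hlam0 (by positivity), Matrix.PosSemidef.of_dotProduct_mulVec_nonneg ?_ ?_⟩
    · simp only [sub_sub, ← Complex.ofReal_add, hqd]
      exact block_herm hΘ.1 g (lam * ε^2 + c) lam
    · intro y
      rw [show y = Sum.elim (y ∘ Sum.inl) (y ∘ Sum.inr) from (Sum.elim_comp_inl_inr y).symm]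
      simp only [sub_sub, hqd]
      rw [block_expand Θ g ((lam : ℝ) : ℂ) ((lam * ε^2 : ℝ) + (c : ℝ) : ℂ) (y ∘ Sum.inl)
        (y ∘ Sum.inr)]
      set t : ℂ := (y ∘ Sum.inl) 0 with htdef
      rcases eq_or_ne t 0 with h0 | h0
      · simp only [h0, zero_smul, zero_add, map_zero, zero_mul, mul_zero, sub_zero]
        rw [dot_self_eq, ← Complex.ofReal_mul, Complex.le_def]
        constructor
        · simp only [Complex.add_re, Complex.ofReal_re, Complex.zero_re]
          have := (quad_nonneg hΘ (y ∘ Sum.inr)).1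
          have := mul_nonneg hlam0 (nsq_nonneg (y ∘ Sum.inr))
          linarith
        · simp only [Complex.add_im, Complex.ofReal_im, Complex.zero_im,
            (quad_nonneg hΘ (y ∘ Sum.inr)).2]
          ring
      · obtain ⟨δ, hδeq⟩ : ∃ δ, (y ∘ Sum.inr) = t • δ := ⟨t⁻¹ • (y ∘ Sum.inr),
          (smul_inv_smul₀ h0 (y ∘ Sum.inr)).symm⟩
        rw [hδeq, ← smul_add]
        simp only [mulVec_smul, dotProduct_smul, smul_dot_left, smul_eq_mul]
        have hmod : conj t * t = ((‖t‖^2 : ℝ) : ℂ) := by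
          rw [RCLike.conj_mul]; norm_cast
        have hres : t * (conj t * (star (g + δ) ⬝ᵥ (Θ *ᵥ (g + δ))))
            + ((lam : ℝ) : ℂ) * (t * (conj t * (star δ ⬝ᵥ δ)))
            - conj t * t * (((lam * ε^2 : ℝ) : ℂ) + ((c : ℝ) : ℂ))
            = ((‖t‖^2 : ℝ) : ℂ) * ((star (g + δ) ⬝ᵥ (Θ *ᵥ (g + δ)))
              + ((lam : ℝ) : ℂ) * (star δ ⬝ᵥ δ)
              - (((lam * ε^2 : ℝ) : ℂ) + ((c : ℝ) : ℂ))) := by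
          rw [← hmod]; ring
        rw [hres, dot_self_eq δ, ← Complex.ofReal_mul, Complex.le_def]
        have hb2 := (quad_nonneg hΘ (g + δ)).2
        have hkd := hkey δ
        constructor
        · simp only [Complex.zero_re, Complex.re_ofReal_mul, Complex.add_re, Complex.sub_re,
            Complex.ofReal_re]
          apply mul_nonneg (by positivity)
          linarith
        · simp only [Complex.zero_im, Complex.im_ofReal_mul, Complex.add_im, Complex.sub_im,
            Complex.ofReal_im, hb2]
          ring
  · rintro ⟨q, hq0, hPSD⟩ δ hδ
    have hδ2 := (hsq δ).mp hδ
    have hv := hPSD.dotProduct_mulVec_nonneg (Sum.elim (fun _ => (1:ℂ)) δ)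
    simp only [sub_sub] at hv
    rw [block_expand Θ g ((q / ε^2 : ℝ) : ℂ) ((q : ℂ) + (c : ℂ)) (fun _ => (1:ℂ)) δ] at hv
    simp only [one_smul, _root_.map_one, one_mul, mul_one] at hv
    rw [dot_self_eq δ, ← Complex.ofReal_mul, Complex.le_def] at hv
    obtain ⟨hvre, hvim⟩ := hv
    simp only [Complex.zero_re, Complex.add_re, Complex.sub_re, Complex.ofReal_re,
      Complex.add_im, Complex.zero_im] at hvre
    have hquot : (q / ε^2) * Nsq δ ≤ q := by
      have h1 : (q / ε^2) * Nsq δ ≤ (q / ε^2) * ε^2 := by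
        apply mul_le_mul_of_nonneg_left hδ2 (by positivity)
      have h2 : (q / ε^2) * ε^2 = q := by field_simp
      linarith
    rw [Complex.le_def]
    refine ⟨?_, ?_⟩
    · simp only [Complex.ofReal_re]
      linarith
    · simp only [Complex.ofReal_im]
      exact ((quad_nonneg hΘ (g + δ)).2).symm

end
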